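/- Let L1, L2, L3 be concurrent non-coplanar lines through a point p, and let L4 be a line not containing p. Then the Plücker vectors of L1, L2, L3, L4 are linearly independent, and a line L depends linearly on them if and only if L contains p or L lies in the plane determined by L4 and p. -/

import Mathlib

set_option maxHeartbeats 1000000

def plucker (p q : Fin 4 → ℝ) : Fin 6 → ℝ :=
  ![p 0 * q 1 - p 1 * q 0, p 0 * q 2 - p 2 * q 0, p 0 * q 3 - p 3 * q 0,
    p 1 * q 2 - p 2 * q 1, p 1 * q 3 - p 3 * q 1, p 2 * q 3 - p 3 * q 2]

lemma pl0 (p q : Fin 4 → ℝ) : plucker p q 0 = p 0 * q 1 - p 1 * q 0 := rfl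
lemma pl1 (p q : Fin 4 → ℝ) : plucker p q 1 = p 0 * q 2 - p 2 * q 0 := rfl
lemma pl2 (p q : Fin 4 → ℝ) : plucker p q 2 = p 0 * q 3 - p 3 * q 0 := rfl
lemma pl3 (p q : Fin 4 → ℝ) : plucker p q 3 = p 1 * q 2 - p 2 * q 1 := rfl
lemma pl4 (p q : Fin 4 → ℝ) : plucker p q 4 = p 1 * q 3 - p 3 * q 1 := rfl
lemma pl5 (p q : Fin 4 → ℝ) : plucker p q 5 = p 2 * q 3 - p 3 * q 2 := rfl

lemma funext6 {f g : Fin 6 → ℝ} (h0 : f 0 = g 0) (h1 : f 1 = g 1) (h2 : f 2 = g 2)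
    (h3 : f 3 = g 3) (h4 : f 4 = g 4) (h5 : f 5 = g 5) : f = g := by
  funext j; fin_cases j
  exacts [h0, h1, h2, h3, h4, h5]

lemma funext4 {f g : Fin 4 → ℝ} (h0 : f 0 = g 0) (h1 : f 1 = g 1) (h2 : f 2 = g 2)
    (h3 : f 3 = g 3) : f = g := by
  funext j; fin_cases j
  exacts [h0, h1, h2, h3]

lemma funext3 {f g : Fin 3 → ℝ} (h0 : f 0 = g 0) (h1 : f 1 = g 1) (h2 : f 2 = g 2) : f = g := by
  funext j; fin_cases j
  exacts [h0, h1, h2]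

def pA : Fin 6 → Fin 4 := ![0,0,0,1,1,2]
def pB : Fin 6 → Fin 4 := ![1,2,3,2,3,3]

lemma pA0 : pA 0 = 0 := rfl
lemma pA1 : pA 1 = 0 := rfl
lemma pA2 : pA 2 = 0 := rfl
lemma pA3 : pA 3 = 1 := rfl
lemma pA4 : pA 4 = 1 := rfl
lemma pA5 : pA 5 = 2 := rfl
lemma pB0 : pB 0 = 1 := rfl
lemma pB1 : pB 1 = 2 := rfl
lemma pB2 : pB 2 = 3 := rfl
lemma pB3 : pB 3 = 2 := rfl
lemma pB4 : pB 4 = 3 := rfl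
lemma pB5 : pB 5 = 3 := rfl

def comp2 (B : Matrix (Fin 4) (Fin 4) ℝ) : Matrix (Fin 6) (Fin 6) ℝ :=
  Matrix.of fun i k => plucker (fun t => B t (pA k)) (fun t => B t (pB k)) i

lemma plucker_mulVec (B : Matrix (Fin 4) (Fin 4) ℝ) (x y : Fin 4 → ℝ) :
    plucker (B.mulVec x) (B.mulVec y) = (comp2 B).mulVec (plucker x y) := by
  have h0 : plucker (B.mulVec x) (B.mulVec y) 0 = ((comp2 B).mulVec (plucker x y)) 0 := by
    simp only [comp2, Matrix.mulVec, dotProduct, Fin.sum_univ_four, Fin.sum_univ_six,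
      Matrix.of_apply, pl0, pl1, pl2, pl3, pl4, pl5, pA0, pA1, pA2, pA3, pA4, pA5,
      pB0, pB1, pB2, pB3, pB4, pB5]; ring
  have h1 : plucker (B.mulVec x) (B.mulVec y) 1 = ((comp2 B).mulVec (plucker x y)) 1 := by
    simp only [comp2, Matrix.mulVec, dotProduct, Fin.sum_univ_four, Fin.sum_univ_six,
      Matrix.of_apply, pl0, pl1, pl2, pl3, pl4, pl5, pA0, pA1, pA2, pA3, pA4, pA5,
      pB0, pB1, pB2, pB3, pB4, pB5]; ring
  have h2 : plucker (B.mulVec x) (B.mulVec y) 2 = ((comp2 B).mulVec (plucker x y)) 2 := by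
    simp only [comp2, Matrix.mulVec, dotProduct, Fin.sum_univ_four, Fin.sum_univ_six,
      Matrix.of_apply, pl0, pl1, pl2, pl3, pl4, pl5, pA0, pA1, pA2, pA3, pA4, pA5,
      pB0, pB1, pB2, pB3, pB4, pB5]; ring
  have h3 : plucker (B.mulVec x) (B.mulVec y) 3 = ((comp2 B).mulVec (plucker x y)) 3 := by
    simp only [comp2, Matrix.mulVec, dotProduct, Fin.sum_univ_four, Fin.sum_univ_six,
      Matrix.of_apply, pl0, pl1, pl2, pl3, pl4, pl5, pA0, pA1, pA2, pA3, pA4, pA5,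
      pB0, pB1, pB2, pB3, pB4, pB5]; ring
  have h4 : plucker (B.mulVec x) (B.mulVec y) 4 = ((comp2 B).mulVec (plucker x y)) 4 := by
    simp only [comp2, Matrix.mulVec, dotProduct, Fin.sum_univ_four, Fin.sum_univ_six,
      Matrix.of_apply, pl0, pl1, pl2, pl3, pl4, pl5, pA0, pA1, pA2, pA3, pA4, pA5,
      pB0, pB1, pB2, pB3, pB4, pB5]; ring
  have h5 : plucker (B.mulVec x) (B.mulVec y) 5 = ((comp2 B).mulVec (plucker x y)) 5 := by
    simp only [comp2, Matrix.mulVec, dotProduct, Fin.sum_univ_four, Fin.sum_univ_six,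
      Matrix.of_apply, pl0, pl1, pl2, pl3, pl4, pl5, pA0, pA1, pA2, pA3, pA4, pA5,
      pB0, pB1, pB2, pB3, pB4, pB5]; ring
  exact funext6 h0 h1 h2 h3 h4 h5

lemma pls0 : plucker (Pi.single 0 1) (Pi.single 1 1) = (Pi.single 0 1 : Fin 6 → ℝ) :=
  funext6 (by norm_num : (1:ℝ)*1 - 0*0 = 1) (by norm_num : (1:ℝ)*0 - 0*0 = 0) (by norm_num : (1:ℝ)*0 - 0*0 = 0) (by norm_num : (0:ℝ)*0 - 0*1 = 0) (by norm_num : (0:ℝ)*0 - 0*1 = 0) (by norm_num : (0:ℝ)*0 - 0*0 = 0)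
lemma pls1 : plucker (Pi.single 0 1) (Pi.single 2 1) = (Pi.single 1 1 : Fin 6 → ℝ) :=
  funext6 (by norm_num : (1:ℝ)*0 - 0*0 = 0) (by norm_num : (1:ℝ)*1 - 0*0 = 1) (by norm_num : (1:ℝ)*0 - 0*0 = 0) (by norm_num : (0:ℝ)*1 - 0*0 = 0) (by norm_num : (0:ℝ)*0 - 0*0 = 0) (by norm_num : (0:ℝ)*0 - 0*1 = 0)
lemma pls2 : plucker (Pi.single 0 1) (Pi.single 3 1) = (Pi.single 2 1 : Fin 6 → ℝ) :=
  funext6 (by norm_num : (1:ℝ)*0 - 0*0 = 0) (by norm_num : (1:ℝ)*0 - 0*0 = 0) (by norm_num : (1:ℝ)*1 - 0*0 = 1) (by norm_num : (0:ℝ)*0 - 0*0 = 0) (by norm_num : (0:ℝ)*1 - 0*0 = 0) (by norm_num : (0:ℝ)*1 - 0*0 = 0)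
lemma pls3 : plucker (Pi.single 1 1) (Pi.single 2 1) = (Pi.single 3 1 : Fin 6 → ℝ) :=
  funext6 (by norm_num : (0:ℝ)*0 - 1*0 = 0) (by norm_num : (0:ℝ)*1 - 0*0 = 0) (by norm_num : (0:ℝ)*0 - 0*0 = 0) (by norm_num : (1:ℝ)*1 - 0*0 = 1) (by norm_num : (1:ℝ)*0 - 0*0 = 0) (by norm_num : (0:ℝ)*0 - 0*1 = 0)
lemma pls4 : plucker (Pi.single 1 1) (Pi.single 3 1) = (Pi.single 4 1 : Fin 6 → ℝ) :=
  funext6 (by norm_num : (0:ℝ)*0 - 1*0 = 0) (by norm_num : (0:ℝ)*0 - 0*0 = 0) (by norm_num : (0:ℝ)*1 - 0*0 = 0) (by norm_num : (1:ℝ)*0 - 0*0 = 0) (by norm_num : (1:ℝ)*1 - 0*0 = 1) (by norm_num : (0:ℝ)*1 - 0*0 = 0)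
lemma pls5 : plucker (Pi.single 2 1) (Pi.single 3 1) = (Pi.single 5 1 : Fin 6 → ℝ) :=
  funext6 (by norm_num : (0:ℝ)*0 - 0*0 = 0) (by norm_num : (0:ℝ)*0 - 1*0 = 0) (by norm_num : (0:ℝ)*1 - 0*0 = 0) (by norm_num : (0:ℝ)*0 - 1*0 = 0) (by norm_num : (0:ℝ)*1 - 0*0 = 0) (by norm_num : (1:ℝ)*1 - 0*0 = 1)

lemma plucker_single (k : Fin 6) :
    plucker (Pi.single (pA k) 1) (Pi.single (pB k) 1) = (Pi.single k 1 : Fin 6 → ℝ) := by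
  fin_cases k
  exacts [pls0, pls1, pls2, pls3, pls4, pls5]

lemma comp2_col (M : Matrix (Fin 4) (Fin 4) ℝ) (k : Fin 6) :
    (comp2 M).mulVec (Pi.single k 1) =
      plucker (M.mulVec (Pi.single (pA k) 1)) (M.mulVec (Pi.single (pB k) 1)) := by
  rw [plucker_mulVec, plucker_single]

lemma comp2_one : comp2 (1 : Matrix (Fin 4) (Fin 4) ℝ) = 1 := by
  ext i k
  have h := congrFun (comp2_col 1 k) i
  rw [Matrix.one_mulVec, Matrix.one_mulVec, plucker_single, Matrix.mulVec_single] at h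
  simpa [Matrix.one_apply, Pi.single_apply, eq_comm] using h

lemma comp2_mul (A B : Matrix (Fin 4) (Fin 4) ℝ) :
    comp2 (A * B) = comp2 A * comp2 B := by
  ext i k
  have h : (comp2 (A * B)).mulVec (Pi.single k 1) =
      (comp2 A * comp2 B).mulVec (Pi.single k 1) := by
    rw [comp2_col, ← Matrix.mulVec_mulVec, ← Matrix.mulVec_mulVec, plucker_mulVec,
      plucker_mulVec, Matrix.mulVec_mulVec, plucker_single]
  have h2 := congrFun h i
  rw [Matrix.mulVec_single, Matrix.mulVec_single] at h2
  simpa using h2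
lemma mem_span_triple {M : Type*} [AddCommGroup M] [Module ℝ M] {a b c z : M} :
    z ∈ Submodule.span ℝ ({a, b, c} : Set M) ↔ ∃ x y w : ℝ, x • a + y • b + w • c = z := by
  rw [show ({a, b, c} : Set M) = insert a {b, c} from rfl, Submodule.mem_span_insert]
  constructor
  · rintro ⟨x, z', hz', rfl⟩
    rcases Submodule.mem_span_pair.1 hz' with ⟨y, w, rfl⟩
    exact ⟨x, y, w, by abel⟩
  · rintro ⟨x, y, w, rfl⟩
    exact ⟨x, y • b + w • c, Submodule.mem_span_pair.2 ⟨y, w, rfl⟩, by abel⟩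

lemma mem_span_quad {M : Type*} [AddCommGroup M] [Module ℝ M] {a b c d z : M} :
    z ∈ Submodule.span ℝ ({a, b, c, d} : Set M) ↔
      ∃ k1 k2 k3 k4 : ℝ, k1 • a + k2 • b + k3 • c + k4 • d = z := by
  rw [show ({a, b, c, d} : Set M) = insert a {b, c, d} from rfl, Submodule.mem_span_insert]
  constructor
  · rintro ⟨x, z', hz', rfl⟩
    rcases mem_span_triple.1 hz' with ⟨y, w, k, rfl⟩
    exact ⟨x, y, w, k, by abel⟩
  · rintro ⟨k1, k2, k3, k4, rfl⟩
    exact ⟨k1, k2 • b + k3 • c + k4 • d, mem_span_triple.2 ⟨k2, k3, k4, rfl⟩, by abel⟩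

lemma std_mem (x y : Fin 4 → ℝ) (h2 : x 0 * y 3 - x 3 * y 0 = 0) (h4 : x 1 * y 3 - x 3 * y 1 = 0)
    (hy3 : y 3 ≠ 0) (hind : ∀ a b : ℝ, a • x + b • y = 0 → a = 0 ∧ b = 0) :
    (Pi.single 2 1 : Fin 4 → ℝ) ∈ Submodule.span ℝ ({x, y} : Set (Fin 4 → ℝ)) := by
  set t := y 3 * x 2 - x 3 * y 2 with ht
  have htne : t ≠ 0 := by
    intro h0
    have c0 : y 3 * x 0 + (-(x 3)) * y 0 = 0 := by linear_combination h2
    have c1 : y 3 * x 1 + (-(x 3)) * y 1 = 0 := by linear_combination h4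
    have c2 : y 3 * x 2 + (-(x 3)) * y 2 = 0 := by linear_combination h0 - ht
    have c3 : y 3 * x 3 + (-(x 3)) * y 3 = 0 := by ring
    have hz : y 3 • x + (-(x 3)) • y = 0 := funext4 c0 c1 c2 c3
    exact hy3 (hind _ _ hz).1
  have e0 : (t⁻¹ * y 3) * x 0 + (-(t⁻¹ * x 3)) * y 0 = 0 := by linear_combination t⁻¹ * h2
  have e1 : (t⁻¹ * y 3) * x 1 + (-(t⁻¹ * x 3)) * y 1 = 0 := by linear_combination t⁻¹ * h4
  have e2 : (t⁻¹ * y 3) * x 2 + (-(t⁻¹ * x 3)) * y 2 = 1 := by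
    linear_combination inv_mul_cancel₀ htne - t⁻¹ * ht
  have e3 : (t⁻¹ * y 3) * x 3 + (-(t⁻¹ * x 3)) * y 3 = 0 := by ring
  exact Submodule.mem_span_pair.2 ⟨t⁻¹ * y 3, -(t⁻¹ * x 3), funext4 e0 e1 e2 e3⟩

lemma std_back (x y : Fin 4 → ℝ) (a b : ℝ) (hab : a • x + b • y = (Pi.single 2 1 : Fin 4 → ℝ)) :
    x 0 * y 3 - x 3 * y 0 = 0 ∧ x 1 * y 3 - x 3 * y 1 = 0 := by
  have c0 : a * x 0 + b * y 0 = 0 := congrFun hab 0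
  have c1 : a * x 1 + b * y 1 = 0 := congrFun hab 1
  have c2 : a * x 2 + b * y 2 = 1 := congrFun hab 2
  have c3 : a * x 3 + b * y 3 = 0 := congrFun hab 3
  have hA0 : a * (x 0 * y 3 - x 3 * y 0) = 0 := by linear_combination y 3 * c0 - y 0 * c3
  have hB0 : b * (x 0 * y 3 - x 3 * y 0) = 0 := by linear_combination x 0 * c3 - x 3 * c0
  have hA1 : a * (x 1 * y 3 - x 3 * y 1) = 0 := by linear_combination y 3 * c1 - y 1 * c3
  have hB1 : b * (x 1 * y 3 - x 3 * y 1) = 0 := by linear_combination x 1 * c3 - x 3 * c1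
  have hab0 : a ≠ 0 ∨ b ≠ 0 := by
    by_contra h
    push_neg at h
    rw [h.1, h.2] at c2; norm_num at c2
  rcases hab0 with ha | hb
  · exact ⟨(mul_eq_zero.1 hA0).resolve_left ha, (mul_eq_zero.1 hA1).resolve_left ha⟩
  · exact ⟨(mul_eq_zero.1 hB0).resolve_left hb, (mul_eq_zero.1 hB1).resolve_left hb⟩

lemma std_iff (x y : Fin 4 → ℝ) (hind : ∀ a b : ℝ, a • x + b • y = 0 → a = 0 ∧ b = 0) :
    (x 0 * y 3 - x 3 * y 0 = 0 ∧ x 1 * y 3 - x 3 * y 1 = 0) ↔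
      ((Pi.single 2 1 : Fin 4 → ℝ) ∈ Submodule.span ℝ ({x, y} : Set (Fin 4 → ℝ)) ∨
        (x 3 = 0 ∧ y 3 = 0)) := by
  constructor
  · rintro ⟨h2, h4⟩
    by_cases hy3 : y 3 = 0
    · by_cases hx3 : x 3 = 0
      · exact Or.inr ⟨hx3, hy3⟩
      · left
        rw [Set.pair_comm]
        refine std_mem y x (by linear_combination -h2) (by linear_combination -h4) hx3 ?_
        intro a b hab
        have hab' : b • x + a • y = 0 := by rw [add_comm]; exact hab
        exact ⟨(hind b a hab').2, (hind b a hab').1⟩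
    · exact Or.inl (std_mem x y h2 h4 hy3 hind)
  · rintro (hmem | ⟨hx3, hy3⟩)
    · rcases Submodule.mem_span_pair.1 hmem with ⟨a, b, hab⟩
      exact std_back x y a b hab
    · constructor <;> rw [hx3, hy3] <;> ring

theorem three_concurrent_plus_one (p : Fin 4 → ℝ) (q : Fin 3 → (Fin 4 → ℝ))
    (r s : Fin 4 → ℝ)
    (hli : ∀ i, LinearIndependent ℝ ![p, q i])
    (hncop : Submodule.span ℝ {p, q 0, q 1, q 2} = ⊤)
    (hrs : LinearIndependent ℝ ![r, s])
    (hp4 : p ∉ Submodule.span ℝ {r, s}) :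
    LinearIndependent ℝ
      ![plucker p (q 0), plucker p (q 1), plucker p (q 2), plucker r s] ∧
    ∀ u v : Fin 4 → ℝ, LinearIndependent ℝ ![u, v] →
      (plucker u v ∈ Submodule.span ℝ
          {plucker p (q 0), plucker p (q 1), plucker p (q 2), plucker r s} ↔
        (p ∈ Submodule.span ℝ {u, v} ∨
          Submodule.span ℝ {u, v} ≤ Submodule.span ℝ {r, s, p})) := by
  classical
  -- p, q's form a basis
  have hfull : LinearIndependent ℝ ![p, q 0, q 1, q 2] := by
    rw [linearIndependent_iff_card_eq_finrank_span]
    have hr : Set.range ![p, q 0, q 1, q 2] = ({p, q 0, q 1, q 2} : Set (Fin 4 → ℝ)) := by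
      simp only [Matrix.range_cons, Matrix.range_empty, Set.singleton_union, Set.union_empty,
        Set.union_insert, Set.union_singleton]
      apply Set.ext; intro z
      simp only [Set.mem_insert_iff, Set.mem_singleton_iff]
      tauto
    rw [Set.finrank, hr, hncop, finrank_top]
    simp
  have hfull' := Fintype.linearIndependent_iff.1 hfull
  have hrs' := LinearIndependent.pair_iff.1 hrs
  -- find w among the q's outside the plane
  have hw : ∃ j : Fin 3, q j ∉ Submodule.span ℝ ({r, s, p} : Set (Fin 4 → ℝ)) := by
    by_contra hcon
    push_neg at hcon
    have hsub : Submodule.span ℝ ({p, q 0, q 1, q 2} : Set (Fin 4 → ℝ)) ≤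
        Submodule.span ℝ ({r, s, p} : Set (Fin 4 → ℝ)) := by
      apply Submodule.span_le.2
      intro z hz
      simp only [Set.mem_insert_iff, Set.mem_singleton_iff] at hz
      rcases hz with rfl | rfl | rfl | rfl
      · exact Submodule.subset_span (by simp)
      · exact hcon 0
      · exact hcon 1
      · exact hcon 2
    rw [hncop] at hsub
    have h1 : Submodule.span ℝ ({r, s, p} : Set (Fin 4 → ℝ)) = ⊤ := top_unique hsub
    have h2 : Set.range ![r, s, p] = ({r, s, p} : Set (Fin 4 → ℝ)) := by
      simp only [Matrix.range_cons, Matrix.range_empty, Set.singleton_union, Set.union_empty,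
        Set.union_insert, Set.union_singleton]
      apply Set.ext; intro z
      simp only [Set.mem_insert_iff, Set.mem_singleton_iff]
      tauto
    have h3 := finrank_range_le_card ![r, s, p] (M := Fin 4 → ℝ) (R := ℝ)
    rw [Set.finrank, h2, h1, finrank_top] at h3
    simp at h3
  obtain ⟨jw, hwns⟩ := hw
  set w : Fin 4 → ℝ := q jw with hwdef
  -- r s p w is a basis
  have hv : LinearIndependent ℝ ![r, s, p, w] := by
    rw [Fintype.linearIndependent_iff]
    intro g hg
    have hg' : g 0 • r + g 1 • s + g 2 • p + g 3 • w = 0 := by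
      rw [Fin.sum_univ_four] at hg; exact hg
    have hg3 : g 3 = 0 := by
      by_contra hne
      apply hwns
      rw [mem_span_triple]
      refine ⟨-(g 0 / g 3), -(g 1 / g 3), -(g 2 / g 3), funext fun j => ?_⟩
      have hj : g 0 * r j + g 1 * s j + g 2 * p j + g 3 * w j = 0 := congrFun hg' j
      show -(g 0 / g 3) * r j + -(g 1 / g 3) * s j + -(g 2 / g 3) * p j = w j
      have hc := mul_inv_cancel₀ hne
      linear_combination (-(g 3)⁻¹) * hj + (w j) * hc
    have hg2 : g 2 = 0 := by
      by_contra hne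
      apply hp4
      rw [Submodule.mem_span_pair]
      refine ⟨-(g 0 / g 2), -(g 1 / g 2), funext fun j => ?_⟩
      have hj : g 0 * r j + g 1 * s j + g 2 * p j + g 3 * w j = 0 := congrFun hg' j
      show -(g 0 / g 2) * r j + -(g 1 / g 2) * s j = p j
      have hc := mul_inv_cancel₀ hne
      linear_combination (-(g 2)⁻¹) * hj + (p j) * hc + ((g 2)⁻¹ * w j) * hg3
    have h01 : g 0 = 0 ∧ g 1 = 0 := by
      apply hrs' (g 0) (g 1)
      have := hg'
      rw [hg2, hg3] at this
      simpa using this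
    intro i; fin_cases i
    exacts [h01.1, h01.2, hg2, hg3]
  have hcard : Fintype.card (Fin 4) = Module.finrank ℝ (Fin 4 → ℝ) := by simp
  let bb : Module.Basis (Fin 4) ℝ (Fin 4 → ℝ) := basisOfLinearIndependentOfCardEqFinrank hv hcard
  have hbb : ⇑bb = ![r, s, p, w] := coe_basisOfLinearIndependentOfCardEqFinrank hv hcard
  have hbb0 : bb 0 = r := by rw [hbb]; rfl
  have hbb1 : bb 1 = s := by rw [hbb]; rfl
  have hbb2 : bb 2 = p := by rw [hbb]; rfl
  have hbb3 : bb 3 = w := by rw [hbb]; rfl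
  -- the change of basis matrix
  set B : Matrix (Fin 4) (Fin 4) ℝ := Matrix.of fun i j => ![r, s, p, w] j i with hBdef
  have hBmul : ∀ x : Fin 4 → ℝ, B.mulVec x = bb.equivFun.symm x := by
    intro x
    rw [Module.Basis.equivFun_symm_apply, Fin.sum_univ_four, hbb0, hbb1, hbb2, hbb3]
    funext i
    simp only [Matrix.mulVec, dotProduct, Fin.sum_univ_four]
    show r i * x 0 + s i * x 1 + p i * x 2 + w i * x 3 =
      (x 0 • r + x 1 • s + x 2 • p + x 3 • w) i
    show r i * x 0 + s i * x 1 + p i * x 2 + w i * x 3 =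
      x 0 * r i + x 1 * s i + x 2 * p i + x 3 * w i
    ring
  have hac : ∀ z : Fin 4 → ℝ, B.mulVec (bb.equivFun z) = z := by
    intro z; rw [hBmul, bb.equivFun.symm_apply_apply]
  have hef : ∀ i : Fin 4, bb.equivFun (bb i) = Pi.single i 1 := by
    intro i; funext j
    simp [Module.Basis.equivFun_apply, Module.Basis.repr_self, Finsupp.single_apply, Pi.single_apply, eq_comm]
  -- invertibility
  have hBeq : B = (Pi.basisFun ℝ (Fin 4)).toMatrix ⇑bb := by
    ext i j
    simp [Module.Basis.toMatrix_apply, Pi.basisFun_repr, hbb, hBdef]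
  letI : Invertible B := hBeq ▸ (Pi.basisFun ℝ (Fin 4)).invertibleToMatrix bb
  have hΦ2 : comp2 (⅟B) * comp2 B = 1 := by rw [← comp2_mul, invOf_mul_self, comp2_one]
  have hΦinj : ∀ z1 z2 : Fin 6 → ℝ,
      (comp2 B).mulVec z1 = (comp2 B).mulVec z2 → z1 = z2 := by
    intro z1 z2 h
    have h2 := congrArg (fun t => (comp2 (⅟B)).mulVec t) h
    simpa only [Matrix.mulVec_mulVec, hΦ2, Matrix.one_mulVec] using h2
  -- coordinates
  have hp2 : bb.equivFun p = Pi.single 2 1 := by rw [← hbb2, hef]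
  have her : bb.equivFun r = Pi.single 0 1 := by rw [← hbb0, hef]
  have hes : bb.equivFun s = Pi.single 1 1 := by rw [← hbb1, hef]
  have hBp : B.mulVec (Pi.single 2 1) = p := by rw [← hp2, hac]
  have hBr : B.mulVec (Pi.single 0 1) = r := by rw [← her, hac]
  have hBs : B.mulVec (Pi.single 1 1) = s := by rw [← hes, hac]
  set c : Fin 3 → Fin 4 → ℝ := fun i => bb.equivFun (q i) with hcdef
  have hcq : ∀ i, B.mulVec (c i) = q i := fun i => hac (q i)
  have hπ : ∀ i : Fin 3, plucker p (q i) =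
      (comp2 B).mulVec (plucker (Pi.single 2 1) (c i)) := by
    intro i
    conv_lhs => rw [← hBp, ← hcq i]
    rw [plucker_mulVec]
  have hπ4 : plucker r s = (comp2 B).mulVec (Pi.single 0 1) := by
    conv_lhs => rw [← hBr, ← hBs]
    rw [plucker_mulVec, pls0]
  -- independence of the reduced directions d i = (c i 0, c i 1, c i 3)
  have hd : LinearIndependent ℝ (fun i : Fin 3 => (![c i 0, c i 1, c i 3] : Fin 3 → ℝ)) := by
    rw [Fintype.linearIndependent_iff]
    intro g hg
    have hg' : g 0 • (![c 0 0, c 0 1, c 0 3] : Fin 3 → ℝ) + g 1 • ![c 1 0, c 1 1, c 1 3]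
        + g 2 • ![c 2 0, c 2 1, c 2 3] = 0 := by
      rw [Fin.sum_univ_three] at hg; exact hg
    have k0 : g 0 * c 0 0 + g 1 * c 1 0 + g 2 * c 2 0 = 0 := congrFun hg' 0
    have k1 : g 0 * c 0 1 + g 1 * c 1 1 + g 2 * c 2 1 = 0 := congrFun hg' 1
    have k3 : g 0 * c 0 3 + g 1 * c 1 3 + g 2 * c 2 3 = 0 := congrFun hg' 2
    set t : ℝ := g 0 * c 0 2 + g 1 * c 1 2 + g 2 * c 2 2 with htdef
    have hz : g 0 • c 0 + g 1 • c 1 + g 2 • c 2 = t • (Pi.single 2 1 : Fin 4 → ℝ) := by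
      refine funext4 ?_ ?_ ?_ ?_
      · show g 0 * c 0 0 + g 1 * c 1 0 + g 2 * c 2 0 = t * 0
        linear_combination k0
      · show g 0 * c 0 1 + g 1 * c 1 1 + g 2 * c 2 1 = t * 0
        linear_combination k1
      · show g 0 * c 0 2 + g 1 * c 1 2 + g 2 * c 2 2 = t * 1
        linear_combination htdef
      · show g 0 * c 0 3 + g 1 * c 1 3 + g 2 * c 2 3 = t * 0
        linear_combination k3
    have happ : g 0 • q 0 + g 1 • q 1 + g 2 • q 2 = t • p := by
      have h2 := congrArg (fun v => B.mulVec v) hz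
      simpa [Matrix.mulVec_add, Matrix.mulVec_smul, hBp, hcq] using h2
    have hsum : ∑ i, (![-t, g 0, g 1, g 2]) i • (![p, q 0, q 1, q 2]) i = 0 := by
      rw [Fin.sum_univ_four]
      show -t • p + g 0 • q 0 + g 1 • q 1 + g 2 • q 2 = 0
      rw [neg_smul, ← happ]
      abel
    have hcoef := hfull' _ hsum
    intro i; fin_cases i
    exacts [hcoef 1, hcoef 2, hcoef 3]
  have hdspan : ∀ tv : Fin 3 → ℝ, ∃ k : Fin 3 → ℝ,
      k 0 • (![c 0 0, c 0 1, c 0 3] : Fin 3 → ℝ) + k 1 • ![c 1 0, c 1 1, c 1 3]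
        + k 2 • ![c 2 0, c 2 1, c 2 3] = tv := by
    have htop := hd.span_eq_top_of_card_eq_finrank (by simp)
    intro tv
    have hmem : tv ∈ Submodule.span ℝ
        (Set.range fun i : Fin 3 => (![c i 0, c i 1, c i 3] : Fin 3 → ℝ)) := by
      rw [htop]; trivial
    rcases (Submodule.mem_span_range_iff_exists_fun ℝ).1 hmem with ⟨k, hk⟩
    rw [Fin.sum_univ_three] at hk
    exact ⟨k, hk⟩
  -- characterization of the sigma-span
  have sig_iff : ∀ z : Fin 6 → ℝ,
      (∃ k1 k2 k3 k4 : ℝ, k1 • plucker (Pi.single 2 1) (c 0) + k2 • plucker (Pi.single 2 1) (c 1)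
        + k3 • plucker (Pi.single 2 1) (c 2) + k4 • (Pi.single 0 1 : Fin 6 → ℝ) = z) ↔
      (z 2 = 0 ∧ z 4 = 0) := by
    intro z
    constructor
    · rintro ⟨k1, k2, k3, k4, hk⟩
      constructor
      · have h2 : k1 * (0 * c 0 3 - 0 * c 0 0) + k2 * (0 * c 1 3 - 0 * c 1 0)
            + k3 * (0 * c 2 3 - 0 * c 2 0) + k4 * 0 = z 2 := congrFun hk 2
        linear_combination -h2
      · have h4 : k1 * (0 * c 0 3 - 0 * c 0 1) + k2 * (0 * c 1 3 - 0 * c 1 1)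
            + k3 * (0 * c 2 3 - 0 * c 2 1) + k4 * 0 = z 4 := congrFun hk 4
        linear_combination -h4
    · rintro ⟨hz2, hz4⟩
      obtain ⟨k, hk⟩ := hdspan ![-(z 1), -(z 3), z 5]
      have m0 : k 0 * c 0 0 + k 1 * c 1 0 + k 2 * c 2 0 = -(z 1) := congrFun hk 0
      have m1 : k 0 * c 0 1 + k 1 * c 1 1 + k 2 * c 2 1 = -(z 3) := congrFun hk 1
      have m2 : k 0 * c 0 3 + k 1 * c 1 3 + k 2 * c 2 3 = z 5 := congrFun hk 2
      refine ⟨k 0, k 1, k 2, z 0, funext6 ?_ ?_ ?_ ?_ ?_ ?_⟩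
      · show k 0 * (0 * c 0 1 - 0 * c 0 0) + k 1 * (0 * c 1 1 - 0 * c 1 0)
          + k 2 * (0 * c 2 1 - 0 * c 2 0) + z 0 * 1 = z 0
        ring
      · show k 0 * (0 * c 0 2 - 1 * c 0 0) + k 1 * (0 * c 1 2 - 1 * c 1 0)
          + k 2 * (0 * c 2 2 - 1 * c 2 0) + z 0 * 0 = z 1
        linear_combination -m0
      · show k 0 * (0 * c 0 3 - 0 * c 0 0) + k 1 * (0 * c 1 3 - 0 * c 1 0)
          + k 2 * (0 * c 2 3 - 0 * c 2 0) + z 0 * 0 = z 2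
        linear_combination -hz2
      · show k 0 * (0 * c 0 2 - 1 * c 0 1) + k 1 * (0 * c 1 2 - 1 * c 1 1)
          + k 2 * (0 * c 2 2 - 1 * c 2 1) + z 0 * 0 = z 3
        linear_combination -m1
      · show k 0 * (0 * c 0 3 - 0 * c 0 1) + k 1 * (0 * c 1 3 - 0 * c 1 1)
          + k 2 * (0 * c 2 3 - 0 * c 2 1) + z 0 * 0 = z 4
        linear_combination -hz4
      · show k 0 * (1 * c 0 3 - 0 * c 0 2) + k 1 * (1 * c 1 3 - 0 * c 1 2)
          + k 2 * (1 * c 2 3 - 0 * c 2 2) + z 0 * 0 = z 5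
        linear_combination m2
  constructor
  · -- linear independence of the four Plücker vectors
    rw [Fintype.linearIndependent_iff]
    intro g hg
    have hg' : g 0 • plucker p (q 0) + g 1 • plucker p (q 1) + g 2 • plucker p (q 2)
        + g 3 • plucker r s = 0 := by
      rw [Fin.sum_univ_four] at hg; exact hg
    have hcomb : (comp2 B).mulVec (g 0 • plucker (Pi.single 2 1) (c 0)
        + g 1 • plucker (Pi.single 2 1) (c 1) + g 2 • plucker (Pi.single 2 1) (c 2)
        + g 3 • (Pi.single 0 1 : Fin 6 → ℝ)) = (comp2 B).mulVec 0 := by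
      simp only [Matrix.mulVec_add, Matrix.mulVec_smul, Matrix.mulVec_zero]
      rw [← hπ 0, ← hπ 1, ← hπ 2, ← hπ4]
      exact hg'
    have hzero := hΦinj _ _ hcomb
    have hg3 : g 3 = 0 := by
      have h0 : g 0 * (0 * c 0 1 - 0 * c 0 0) + g 1 * (0 * c 1 1 - 0 * c 1 0)
          + g 2 * (0 * c 2 1 - 0 * c 2 0) + g 3 * 1 = 0 := congrFun hzero 0
      linear_combination h0
    have h1 : g 0 * (0 * c 0 2 - 1 * c 0 0) + g 1 * (0 * c 1 2 - 1 * c 1 0)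
        + g 2 * (0 * c 2 2 - 1 * c 2 0) + g 3 * 0 = 0 := congrFun hzero 1
    have h3 : g 0 * (0 * c 0 2 - 1 * c 0 1) + g 1 * (0 * c 1 2 - 1 * c 1 1)
        + g 2 * (0 * c 2 2 - 1 * c 2 1) + g 3 * 0 = 0 := congrFun hzero 3
    have h5 : g 0 * (1 * c 0 3 - 0 * c 0 2) + g 1 * (1 * c 1 3 - 0 * c 1 2)
        + g 2 * (1 * c 2 3 - 0 * c 2 2) + g 3 * 0 = 0 := congrFun hzero 5
    have hdz : ∑ i, (![g 0, g 1, g 2]) i • (fun i : Fin 3 => (![c i 0, c i 1, c i 3] : Fin 3 → ℝ)) i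
        = 0 := by
      rw [Fin.sum_univ_three]
      refine funext3 ?_ ?_ ?_
      · show g 0 * c 0 0 + g 1 * c 1 0 + g 2 * c 2 0 = 0
        linear_combination -h1
      · show g 0 * c 0 1 + g 1 * c 1 1 + g 2 * c 2 1 = 0
        linear_combination -h3
      · show g 0 * c 0 3 + g 1 * c 1 3 + g 2 * c 2 3 = 0
        linear_combination h5
    have hdcoef := Fintype.linearIndependent_iff.1 hd _ hdz
    intro i; fin_cases i
    exacts [hdcoef 0, hdcoef 1, hdcoef 2, hg3]
  · -- the membership criterion
    intro u v huv
    have huv' := LinearIndependent.pair_iff.1 huv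
    set x : Fin 4 → ℝ := bb.equivFun u with hxdef
    set y : Fin 4 → ℝ := bb.equivFun v with hydef
    have hBu : B.mulVec x = u := hac u
    have hBv : B.mulVec y = v := hac v
    have hxyind : ∀ a b : ℝ, a • x + b • y = 0 → a = 0 ∧ b = 0 := by
      intro a b hab
      apply huv' a b
      have h2 := congrArg (fun t => B.mulVec t) hab
      simpa [Matrix.mulVec_add, Matrix.mulVec_smul, hBu, hBv, Matrix.mulVec_zero] using h2
    have hplm : plucker u v = (comp2 B).mulVec (plucker x y) := by
      conv_lhs => rw [← hBu, ← hBv]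
      rw [plucker_mulVec]
    have step1 : plucker u v ∈ Submodule.span ℝ
        ({plucker p (q 0), plucker p (q 1), plucker p (q 2), plucker r s} :
          Set (Fin 6 → ℝ)) ↔ (plucker x y 2 = 0 ∧ plucker x y 4 = 0) := by
      rw [mem_span_quad]
      constructor
      · rintro ⟨k1, k2, k3, k4, hk⟩
        apply (sig_iff (plucker x y)).1
        refine ⟨k1, k2, k3, k4, hΦinj _ _ ?_⟩
        simp only [Matrix.mulVec_add, Matrix.mulVec_smul]
        rw [← hπ 0, ← hπ 1, ← hπ 2, ← hπ4, ← hplm]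
        exact hk
      · intro hz
        obtain ⟨k1, k2, k3, k4, hk⟩ := (sig_iff _).2 hz
        refine ⟨k1, k2, k3, k4, ?_⟩
        rw [hπ 0, hπ 1, hπ 2, hπ4, hplm, ← Matrix.mulVec_smul, ← Matrix.mulVec_smul,
          ← Matrix.mulVec_smul, ← Matrix.mulVec_smul, ← Matrix.mulVec_add, ← Matrix.mulVec_add,
          ← Matrix.mulVec_add, hk]
    have step2 : (plucker x y 2 = 0 ∧ plucker x y 4 = 0) ↔
        ((Pi.single 2 1 : Fin 4 → ℝ) ∈ Submodule.span ℝ ({x, y} : Set (Fin 4 → ℝ)) ∨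
          (x 3 = 0 ∧ y 3 = 0)) := by
      rw [pl2, pl4]
      exact std_iff x y hxyind
    have step3 : (Pi.single 2 1 : Fin 4 → ℝ) ∈ Submodule.span ℝ ({x, y} : Set (Fin 4 → ℝ)) ↔
        p ∈ Submodule.span ℝ ({u, v} : Set (Fin 4 → ℝ)) := by
      rw [Submodule.mem_span_pair, Submodule.mem_span_pair]
      constructor
      · rintro ⟨a, b, hab⟩
        refine ⟨a, b, ?_⟩
        have h2 := congrArg (fun t => B.mulVec t) hab
        simpa [Matrix.mulVec_add, Matrix.mulVec_smul, hBu, hBv, hBp] using h2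
      · rintro ⟨a, b, hab⟩
        refine ⟨a, b, ?_⟩
        have h2 := congrArg (fun t => bb.equivFun t) hab
        simpa [map_add, map_smul, hp2, x, y] using h2
    have smem : ∀ z : Fin 4 → ℝ,
        z ∈ Submodule.span ℝ ({r, s, p} : Set (Fin 4 → ℝ)) ↔ bb.equivFun z 3 = 0 := by
      intro z
      rw [mem_span_triple]
      constructor
      · rintro ⟨a, b, cc, rfl⟩
        rw [map_add, map_add, map_smul, map_smul, map_smul, her, hes, hp2]
        show a * 0 + b * 0 + cc * 0 = 0
        ring
      · intro h3
        refine ⟨bb.equivFun z 0, bb.equivFun z 1, bb.equivFun z 2, ?_⟩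
        conv_rhs => rw [← bb.equivFun.symm_apply_apply z]
        rw [Module.Basis.equivFun_symm_apply, Fin.sum_univ_four, hbb0, hbb1, hbb2, hbb3, h3,
          zero_smul, add_zero]
    have step4 : (x 3 = 0 ∧ y 3 = 0) ↔
        Submodule.span ℝ ({u, v} : Set (Fin 4 → ℝ)) ≤
          Submodule.span ℝ ({r, s, p} : Set (Fin 4 → ℝ)) := by
      rw [Submodule.span_le, Set.insert_subset_iff, Set.singleton_subset_iff]
      simp only [SetLike.mem_coe]
      rw [smem u, smem v]
    rw [step1, step2, step3, step4]
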